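/- arXiv:1409.6165 — 6 statements merged into one kernel-verified Lean document; each statement's English description precedes it below -/
import Mathlib

section
/- If u and v are twins in a graph G (i.e., u ≠ v, u and v are non-adjacent, and they have the same neighborhoods), then bc(G) = bc(G − u), where G − u is the graph obtained by deleting vertex u. -/
def SimpleGraph.IsBicliquePartition {V : Type*} (G : SimpleGraph V) {m : ℕ}
    (A B : Fin m → Finset V) : Prop :=
  (∀ i, Disjoint (A i) (B i)) ∧
  (∀ i, ∀ a ∈ A i, ∀ b ∈ B i, G.Adj a b) ∧
  (∀ e ∈ G.edgeSet, ∃! i : Fin m, ∃ a ∈ A i, ∃ b ∈ B i, e = s(a, b))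

noncomputable def SimpleGraph.bcNum {V : Type*} [Fintype V] (G : SimpleGraph V) : ℕ :=
  sInf {m | ∃ A B : Fin m → Finset V, G.IsBicliquePartition A B}

/-- Restriction: a biclique partition of `G` restricts to one of `G - u`. -/
lemma aux_restrict {V : Type*} [DecidableEq V] (G : SimpleGraph V) (u : V)
    {m : ℕ} {A B : Fin m → Finset V} (h : G.IsBicliquePartition A B) :
    ∃ A' B' : Fin m → Finset ↥{w : V | w ≠ u},
      (G.induce {w : V | w ≠ u}).IsBicliquePartition A' B' := by
  obtain ⟨hd, hadj, hcov⟩ := h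
  refine ⟨fun i => (A i).subtype (fun w => w ≠ u),
          fun i => (B i).subtype (fun w => w ≠ u), ?_, ?_, ?_⟩
  · intro i
    rw [Finset.disjoint_left]
    intro a ha hb
    simp only [Finset.mem_subtype] at ha hb
    exact (Finset.disjoint_left.mp (hd i)) ha hb
  · intro i a ha b hb
    simp only [Finset.mem_subtype] at ha hb
    exact hadj i _ ha _ hb
  · intro e he
    induction e using Sym2.ind with
    | _ a b =>
      rw [SimpleGraph.mem_edgeSet] at he
      have hab : G.Adj ↑a ↑b := he
      obtain ⟨i, ⟨x, hx, y, hy, hexy⟩, huniq⟩ := hcov s(↑a, ↑b) hab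
      -- endpoints of the edge are ≠ u
      rw [Sym2.eq_iff] at hexy
      have key : ∃ x' ∈ (A i).subtype (fun w => w ≠ u),
          ∃ y' ∈ (B i).subtype (fun w => w ≠ u), s(a, b) = s(x', y') := by
        rcases hexy with ⟨h1, h2⟩ | ⟨h1, h2⟩
        · refine ⟨a, ?_, b, ?_, rfl⟩
          · rw [Finset.mem_subtype, h1]; exact hx
          · rw [Finset.mem_subtype, h2]; exact hy
        · refine ⟨b, ?_, a, ?_, Sym2.eq_swap⟩
          · rw [Finset.mem_subtype, h2]; exact hx
          · rw [Finset.mem_subtype, h1]; exact hy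
      refine ⟨i, key, ?_⟩
      rintro j ⟨x', hx', y', hy', hexy'⟩
      simp only [Finset.mem_subtype] at hx' hy'
      apply huniq j
      refine ⟨↑x', hx', ↑y', hy', ?_⟩
      rw [Sym2.eq_iff] at hexy' ⊢
      rcases hexy' with ⟨h1, h2⟩ | ⟨h1, h2⟩
      · exact Or.inl ⟨congrArg Subtype.val h1, congrArg Subtype.val h2⟩
      · exact Or.inr ⟨congrArg Subtype.val h1, congrArg Subtype.val h2⟩

/-- Extension: a biclique partition of `G - u` extends to one of `G`, using
the twin `v`. -/
lemma aux_extend {V : Type*} [DecidableEq V] (G : SimpleGraph V) (u v : V)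
    (huv : u ≠ v) (hadj : ¬ G.Adj u v) (htwin : G.neighborSet u = G.neighborSet v)
    {m : ℕ} {A B : Fin m → Finset ↥{w : V | w ≠ u}}
    (h : (G.induce {w : V | w ≠ u}).IsBicliquePartition A B) :
    ∃ A' B' : Fin m → Finset V, G.IsBicliquePartition A' B' := by
  obtain ⟨hd, hadjP, hcov⟩ := h
  have hvu : v ≠ u := huv.symm
  set v' : ↥{w : V | w ≠ u} := ⟨v, hvu⟩ with hv'
  have hu_iff : ∀ w, G.Adj u w ↔ G.Adj v w := by
    intro w
    constructor
    · intro h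
      have : w ∈ G.neighborSet v := htwin ▸ h
      exact this
    · intro h
      have : w ∈ G.neighborSet u := htwin.symm ▸ h
      exact this
  set Ext : Finset ↥{w : V | w ≠ u} → Finset V :=
    fun s => s.image Subtype.val ∪ (if v' ∈ s then {u} else ∅) with hExt
  have memExt : ∀ (s : Finset ↥{w : V | w ≠ u}) (a : V),
      a ∈ Ext s ↔ (∃ x ∈ s, ↑x = a) ∨ (v' ∈ s ∧ a = u) := by
    intro s a
    by_cases hv : v' ∈ s <;> simp [hExt, hv] <;> tauto
  have u_ne : ∀ (x : ↥{w : V | w ≠ u}), (↑x : V) ≠ u := fun x => x.2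
  refine ⟨fun i => Ext (A i), fun i => Ext (B i), ?_, ?_, ?_⟩
  · intro i
    rw [Finset.disjoint_left]
    intro a ha hb
    rw [memExt] at ha hb
    rcases ha with ⟨x, hx, hxa⟩ | ⟨hvA, rfl⟩
    · rcases hb with ⟨y, hy, hya⟩ | ⟨hvB, hau⟩
      · have : x = y := Subtype.ext (hxa.trans hya.symm)
        exact (Finset.disjoint_left.mp (hd i)) hx (this ▸ hy)
      · exact u_ne x (hxa.trans hau)
    · rcases hb with ⟨y, hy, hya⟩ | ⟨hvB, _⟩
      · exact u_ne y hya
      · exact (Finset.disjoint_left.mp (hd i)) hvA hvB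
  · intro i a ha b hb
    rw [memExt] at ha hb
    rcases ha with ⟨x, hx, rfl⟩ | ⟨hvA, rfl⟩
    · rcases hb with ⟨y, hy, rfl⟩ | ⟨hvB, rfl⟩
      · exact hadjP i x hx y hy
      · exact ((hu_iff ↑x).mpr (hadjP i x hx v' hvB).symm).symm
    · rcases hb with ⟨y, hy, rfl⟩ | ⟨hvB, rfl⟩
      · exact (hu_iff ↑y).mpr (hadjP i v' hvA y hy)
      · exact absurd hvB (Finset.disjoint_left.mp (hd i) hvA)
  · -- edge cover
    -- main helper: edges incident to u
    have main : ∀ b : V, G.Adj u b →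
        ∃! i : Fin m, ∃ a' ∈ Ext (A i), ∃ b' ∈ Ext (B i), s(u, b) = s(a', b') := by
      intro b hub
      have hbu : b ≠ u := hub.ne'
      have hbv : b ≠ v := by
        rintro rfl
        exact hadj hub
      have hvb : G.Adj v b := (hu_iff b).mp hub
      set b' : ↥{w : V | w ≠ u} := ⟨b, hbu⟩ with hb'
      have he : (G.induce {w : V | w ≠ u}).Adj v' b' := hvb
      obtain ⟨i, ⟨x, hx, y, hy, hexy⟩, huniq⟩ := hcov s(v', b') he
      rw [Sym2.eq_iff] at hexy
      refine ⟨i, ?_, ?_⟩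
      · rcases hexy with ⟨h1, h2⟩ | ⟨h1, h2⟩
        · refine ⟨u, (memExt _ u).mpr (Or.inr ⟨h1 ▸ hx, rfl⟩),
            b, (memExt _ b).mpr (Or.inl ⟨b', h2 ▸ hy, rfl⟩), rfl⟩
        · refine ⟨b, (memExt _ b).mpr (Or.inl ⟨b', h2 ▸ hx, rfl⟩),
            u, (memExt _ u).mpr (Or.inr ⟨h1 ▸ hy, rfl⟩), Sym2.eq_swap⟩
      · rintro j ⟨p, hp, q, hq, hpq⟩
        rw [memExt] at hp hq
        rw [Sym2.eq_iff] at hpq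
        apply huniq j
        rcases hpq with ⟨h1, h2⟩ | ⟨h1, h2⟩
        · -- p = u, q = b
          subst h1 h2
          rcases hp with ⟨x', hx', hxu⟩ | ⟨hvA, -⟩
          · exact absurd hxu (u_ne x')
          rcases hq with ⟨y', hy', hyb⟩ | ⟨-, hbu'⟩
          · refine ⟨v', hvA, y', hy', ?_⟩
            have : y' = b' := Subtype.ext hyb
            rw [this]
          · exact absurd hbu' hbu
        · -- p = b, q = u
          subst h1 h2
          rcases hq with ⟨y', hy', hyu⟩ | ⟨hvB, -⟩
          · exact absurd hyu (u_ne y')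
          rcases hp with ⟨x', hx', hxb⟩ | ⟨-, hbu'⟩
          · refine ⟨x', hx', v', hvB, ?_⟩
            have : x' = b' := Subtype.ext hxb
            rw [this, Sym2.eq_swap]
          · exact absurd hbu' hbu
    intro e he
    induction e using Sym2.ind with
    | _ a b =>
      rw [SimpleGraph.mem_edgeSet] at he
      by_cases hau : a = u
      · subst hau; exact main b he
      by_cases hbu : b = u
      · subst hbu
        obtain ⟨i, hi, huniq⟩ := main a he.symm
        refine ⟨i, ?_, ?_⟩
        · obtain ⟨p, hp, q, hq, hpq⟩ := hi
          exact ⟨p, hp, q, hq, Sym2.eq_swap.trans hpq⟩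
        · rintro j ⟨p, hp, q, hq, hpq⟩
          exact huniq j ⟨p, hp, q, hq, Sym2.eq_swap.trans hpq⟩
      · -- edge not incident to u
        set a' : ↥{w : V | w ≠ u} := ⟨a, hau⟩
        set b' : ↥{w : V | w ≠ u} := ⟨b, hbu⟩
        have he' : (G.induce {w : V | w ≠ u}).Adj a' b' := he
        obtain ⟨i, ⟨x, hx, y, hy, hexy⟩, huniq⟩ := hcov s(a', b') he'
        have hinj : Function.Injective (Sym2.map (Subtype.val : ↥{w : V | w ≠ u} → V)) :=
          Sym2.map.injective Subtype.val_injective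
        refine ⟨i, ?_, ?_⟩
        · refine ⟨↑x, (memExt _ _).mpr (Or.inl ⟨x, hx, rfl⟩),
            ↑y, (memExt _ _).mpr (Or.inl ⟨y, hy, rfl⟩), ?_⟩
          have := congrArg (Sym2.map Subtype.val) hexy
          simpa using this
        · rintro j ⟨p, hp, q, hq, hpq⟩
          rw [memExt] at hp hq
          rw [Sym2.eq_iff] at hpq
          apply huniq j
          have hget : ∃ p' ∈ A j, ∃ q' ∈ B j, (↑p' : V) = p ∧ (↑q' : V) = q := by
            rcases hp with ⟨p', hp', hpe⟩ | ⟨-, rfl⟩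
            · rcases hq with ⟨q', hq', hqe⟩ | ⟨-, rfl⟩
              · exact ⟨p', hp', q', hq', hpe, hqe⟩
              · rcases hpq with ⟨-, h2⟩ | ⟨h1, -⟩
                · exact absurd h2 hbu
                · exact absurd h1 hau
            · rcases hpq with ⟨h1, -⟩ | ⟨-, h2⟩
              · exact absurd h1 hau
              · exact absurd h2 hbu
          obtain ⟨p', hp', q', hq', rfl, rfl⟩ := hget
          refine ⟨p', hp', q', hq', ?_⟩
          apply hinj
          simp only [Sym2.map_pair_eq, Sym2.eq_iff]
          exact hpq

/-- If `u` and `v` are twins in `G` (distinct vertices with the same neighborhood,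
hence non-adjacent), then `bc(G) = bc(G - u)`. -/
theorem stmt2 {V : Type*} [Fintype V] [DecidableEq V] (G : SimpleGraph V) (u v : V)
    (huv : u ≠ v) (hadj : ¬ G.Adj u v) (htwin : G.neighborSet u = G.neighborSet v) :
    G.bcNum = (G.induce {w : V | w ≠ u}).bcNum := by
  unfold SimpleGraph.bcNum
  congr 1
  ext m
  constructor
  · rintro ⟨A, B, h⟩
    exact aux_restrict G u h
  · rintro ⟨A, B, h⟩
    exact aux_extend G u v huv hadj htwin h
end

section
/- If G is a twin-free finite simple graph whose edge set can be partitioned into r edge-disjoint complete bipartite subgraphs, then G has at most 2^{r+1} − 1 vertices. -/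
/-- A twin-free graph whose edges admit a biclique partition into `r` parts
has at most `2^(r+1) - 1` vertices. -/
theorem stmt3 {V : Type*} [Fintype V] (G : SimpleGraph V)
    (htf : ∀ x y : V, G.neighborSet x = G.neighborSet y → x = y)
    (r : ℕ) (A B : Fin r → Finset V) (hpart : G.IsBicliquePartition A B) :
    Fintype.card V ≤ 2 ^ (r + 1) - 1 := by
  classical
  obtain ⟨hdisj, hadj, huniq⟩ := hpart
  set sd : V → Fin r → Option Bool := fun u i =>
    if u ∈ A i then some true else if u ∈ B i then some false else none with hsd
  have hsdA : ∀ u i, sd u i = some true ↔ u ∈ A i := by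
    intro u i
    simp only [hsd]
    by_cases h1 : u ∈ A i
    · simp [h1]
    · by_cases h2 : u ∈ B i <;> simp [h1, h2]
  have hsdB : ∀ u i, sd u i = some false ↔ u ∈ B i := by
    intro u i
    simp only [hsd]
    by_cases h1 : u ∈ A i
    · have h2 : u ∉ B i := Finset.disjoint_left.mp (hdisj i) h1
      simp [h1, h2]
    · by_cases h2 : u ∈ B i <;> simp [h1, h2]
  -- adjacency characterization
  have hAdj : ∀ u v, G.Adj u v ↔ ∃ i, (u ∈ A i ∧ v ∈ B i) ∨ (v ∈ A i ∧ u ∈ B i) := by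
    intro u v
    constructor
    · intro h
      obtain ⟨i, ⟨a, ha, b, hb, he⟩, -⟩ := huniq s(u, v) (G.mem_edgeSet.mpr h)
      rw [Sym2.eq_iff] at he
      rcases he with ⟨rfl, rfl⟩ | ⟨rfl, rfl⟩
      · exact ⟨i, Or.inl ⟨ha, hb⟩⟩
      · exact ⟨i, Or.inr ⟨ha, hb⟩⟩
    · rintro ⟨i, ⟨h1, h2⟩ | ⟨h1, h2⟩⟩
      · exact hadj i u h1 v h2
      · exact (hadj i v h1 u h2).symm
  -- injectivity of the encoding
  have hinj : ∀ u v, sd u = sd v → u = v := by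
    intro u v h
    apply htf
    ext w
    simp only [SimpleGraph.mem_neighborSet, hAdj]
    simp only [← hsdA, ← hsdB, h]
  -- uniqueness of the biclique containing an edge
  have hU : ∀ u v, ∀ i j : Fin r, u ∈ A i → v ∈ B i →
      ((u ∈ A j ∧ v ∈ B j) ∨ (v ∈ A j ∧ u ∈ B j)) → j = i := by
    intro u v i j hai hbi hj
    have hadj' : G.Adj u v := hadj i u hai v hbi
    obtain ⟨k, -, hk⟩ := huniq s(u, v) (G.mem_edgeSet.mpr hadj')
    have hik : i = k := hk i ⟨u, hai, v, hbi, rfl⟩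
    have hjk : j = k := by
      rcases hj with ⟨h1, h2⟩ | ⟨h1, h2⟩
      · exact hk j ⟨u, h1, v, h2, rfl⟩
      · exact hk j ⟨v, h1, u, h2, Sym2.eq_swap⟩
    rw [hjk, hik]
  -- orientation at a differing coordinate (same support)
  have horient : ∀ u v, (∀ i, sd u i = none ↔ sd v i = none) →
      ∀ k, sd u k ≠ sd v k → (u ∈ A k ∧ v ∈ B k) ∨ (v ∈ A k ∧ u ∈ B k) := by
    intro u v hsupp k hk
    rcases hu : sd u k with _ | bu
    · rw [hu, (hsupp k).mp hu] at hk
      exact absurd rfl hk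
    · rcases hv : sd v k with _ | bv
      · have : sd u k = none := (hsupp k).mpr hv
        rw [hu] at this
        exact absurd this (by simp)
      · have hne : bu ≠ bv := by
          rintro rfl
          rw [hu, hv] at hk
          exact hk rfl
        cases bu <;> cases bv <;> simp at hne
        · exact Or.inr ⟨(hsdA v k).mp hv, (hsdB u k).mp hu⟩
        · exact Or.inl ⟨(hsdA u k).mp hu, (hsdB v k).mp hv⟩
  -- two vertices of the same support differ in at most one coordinate
  have hsingle : ∀ u v, (∀ i, sd u i = none ↔ sd v i = none) →
      ∀ i j, sd u i ≠ sd v i → sd u j ≠ sd v j → i = j := by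
    intro u v hsupp i j hi hj
    rcases horient u v hsupp i hi with ⟨h1, h2⟩ | ⟨h1, h2⟩
    · exact (hU u v i j h1 h2 (horient u v hsupp j hj)).symm
    · exact (hU v u i j h1 h2 (horient u v hsupp j hj).symm).symm
  set supp : V → Finset (Fin r) := fun u => Finset.univ.filter fun i => sd u i ≠ none
    with hsupp_def
  have hsuppiff : ∀ u v S, supp u = S → supp v = S →
      ∀ i, sd u i = none ↔ sd v i = none := by
    intro u v S hu hv i
    have : (i ∈ supp u) = (i ∈ supp v) := by rw [hu, hv]
    simp only [hsupp_def, Finset.mem_filter, Finset.mem_univ, true_and] at this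
    rw [eq_iff_iff] at this
    exact not_iff_not.mp this
  have hex : ∀ u v : V, u ≠ v → ∃ i, sd u i ≠ sd v i := by
    intro u v huv
    by_contra hc
    push_neg at hc
    exact huv (hinj u v (funext hc))
  -- each nonempty-support fiber has at most 2 elements (in fact every fiber)
  have hfib2 : ∀ S : Finset (Fin r),
      (Finset.univ.filter fun u => supp u = S).card ≤ 2 := by
    intro S
    by_contra h
    push_neg at h
    obtain ⟨u, v, w, hu, hv, hw, huv, huw, hvw⟩ := Finset.two_lt_card_iff.mp h
    simp only [Finset.mem_filter, Finset.mem_univ, true_and] at hu hv hw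
    have suv := hsuppiff u v S hu hv
    have suw := hsuppiff u w S hu hw
    have svw := hsuppiff v w S hv hw
    obtain ⟨i, hi⟩ := hex u v huv
    obtain ⟨j, hj⟩ := hex u w huw
    by_cases hij : i = j
    · subst hij
      apply hvw
      apply hinj
      funext k
      by_cases hk : k = i
      · subst hk
        rcases hu' : sd u k with _ | bu
        · rw [hu', (suv k).mp hu'] at hi
          exact absurd rfl hi
        rcases hv' : sd v k with _ | bv
        · have : sd u k = none := (suv k).mpr hv'
          rw [hu'] at this
          exact absurd this (by simp)
        rcases hw' : sd w k with _ | bw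
        · have : sd u k = none := (suw k).mpr hw'
          rw [hu'] at this
          exact absurd this (by simp)
        rw [hu', hv'] at hi
        rw [hu', hw'] at hj
        have h1 : bu ≠ bv := fun e => hi (congrArg some e)
        have h2 : bu ≠ bw := fun e => hj (congrArg some e)
        have h3 : bv = bw := by
          cases bu <;> cases bv <;> cases bw <;>
            first
            | rfl
            | exact absurd rfl h1
            | exact absurd rfl h2
        rw [h3]
      · have h1 : sd u k = sd v k := by
          by_contra hne
          exact hk (hsingle u v suv k i hne hi)
        have h2 : sd u k = sd w k := by
          by_contra hne
          exact hk (hsingle u w suw k i hne hj)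
        rw [← h1, ← h2]
    · have h1 : sd u i = sd w i := by
        by_contra hne
        exact hij (hsingle u w suw i j hne hj)
      have h2 : sd u j = sd v j := by
        by_contra hne
        exact hij (hsingle u v suv i j hi hne)
      have h3 : sd v i ≠ sd w i := by
        rw [← h1]
        exact fun e => hi e.symm
      have h4 : sd v j ≠ sd w j := by
        rw [← h2]
        exact hj
      exact hij (hsingle v w svw i j h3 h4)
  -- the empty-support fiber has at most 1 element
  have hfib0 : (Finset.univ.filter fun u => supp u = ∅).card ≤ 1 := by
    apply Finset.card_le_one.mpr
    intro u hu v hv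
    simp only [Finset.mem_filter, Finset.mem_univ, true_and] at hu hv
    apply hinj
    funext i
    have h1 : sd u i = none := by
      by_contra hc
      have : i ∈ supp u := by
        simp [hsupp_def, hc]
      rw [hu] at this
      exact absurd this (Finset.notMem_empty i)
    have h2 : sd v i = none := by
      by_contra hc
      have : i ∈ supp v := by
        simp [hsupp_def, hc]
      rw [hv] at this
      exact absurd this (Finset.notMem_empty i)
    rw [h1, h2]
  -- counting
  have hcard : Fintype.card V =
      ∑ S : Finset (Fin r), (Finset.univ.filter fun u => supp u = S).card := by
    rw [← Finset.card_univ]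
    exact Finset.card_eq_sum_card_fiberwise fun x _ => Finset.mem_univ _
  rw [hcard]
  rw [← Finset.sum_erase_add _ _ (Finset.mem_univ (∅ : Finset (Fin r)))]
  have hb1 : ∑ S ∈ Finset.univ.erase (∅ : Finset (Fin r)),
      (Finset.univ.filter fun u => supp u = S).card ≤
      (Finset.univ.erase (∅ : Finset (Fin r))).card * 2 := by
    calc ∑ S ∈ Finset.univ.erase (∅ : Finset (Fin r)),
        (Finset.univ.filter fun u => supp u = S).card
        ≤ ∑ _S ∈ Finset.univ.erase (∅ : Finset (Fin r)), 2 :=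
          Finset.sum_le_sum fun S _ => hfib2 S
      _ = (Finset.univ.erase (∅ : Finset (Fin r))).card * 2 := by
          rw [Finset.sum_const, smul_eq_mul]
  have hc : (Finset.univ.erase (∅ : Finset (Fin r))).card = 2 ^ r - 1 := by
    rw [Finset.card_erase_of_mem (Finset.mem_univ _), Finset.card_univ]
    simp [Fintype.card_finset]
  rw [hc] at hb1
  have hp : 1 ≤ 2 ^ r := Nat.one_le_two_pow
  have := Nat.add_le_add hb1 hfib0
  calc _ ≤ (2 ^ r - 1) * 2 + 1 := this
    _ ≤ 2 ^ (r + 1) - 1 := by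
        rw [pow_succ]
        omega
end

section
/- For every r ≥ 0 there exists a twin-free graph G on exactly 2^{r+1} − 1 vertices whose edge set can be partitioned into r edge-disjoint complete bipartite subgraphs. -/
namespace Stmt4Aux

/-- Vertex type: either a vector in `{0,2}^r` (encoded by `Fin r → Bool`),
or a vector with a single `1` at position `k`, arbitrary `{0,2}` entries before
(encoded by `Fin k → Bool`) and `2`'s after. -/
abbrev V (r : ℕ) := (Fin r → Bool) ⊕ (Σ k : Fin r, (Fin (k : ℕ) → Bool))

/-- Coordinates of a vertex, in `Fin 3`. -/
def c {r : ℕ} : V r → Fin r → Fin 3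
  | .inl f, i => if f i then 2 else 0
  | .inr ⟨k, g⟩, i =>
      if h : (i : ℕ) < (k : ℕ) then (if g ⟨i, h⟩ then 2 else 0)
      else if i = k then 1 else 2

lemma c_inl {r : ℕ} (f : Fin r → Bool) (i : Fin r) :
    c (.inl f) i = if f i then 2 else 0 := rfl

lemma c_inr {r : ℕ} (k : Fin r) (g : Fin (k : ℕ) → Bool) (i : Fin r) :
    c (.inr ⟨k, g⟩ : V r) i =
      if h : (i : ℕ) < (k : ℕ) then (if g ⟨i, h⟩ then 2 else 0)
      else if i = k then 1 else 2 := rfl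

lemma one_iff {r : ℕ} (k : Fin r) (g : Fin (k : ℕ) → Bool) (i : Fin r) :
    c (.inr ⟨k, g⟩ : V r) i = 1 ↔ i = k := by
  rw [c_inr]
  split_ifs with h1 h2 h2
  · constructor
    · intro h; exact absurd h (by decide)
    · intro h; omega
  · constructor
    · intro h; exact absurd h (by decide)
    · intro h; omega
  · simpa using h2
  · constructor
    · intro h; exact absurd h (by decide)
    · intro h; exact absurd h h2

lemma not_one_inl {r : ℕ} (f : Fin r → Bool) (i : Fin r) :
    c (.inl f) i ≠ 1 := by
  rw [c_inl]; split_ifs <;> decide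

lemma zero_lt {r : ℕ} (k : Fin r) (g : Fin (k : ℕ) → Bool) (i : Fin r)
    (h : c (.inr ⟨k, g⟩ : V r) i = 0) : (i : ℕ) < (k : ℕ) := by
  by_cases hlt : (i : ℕ) < (k : ℕ)
  · exact hlt
  · rw [c_inr, dif_neg hlt] at h
    split_ifs at h <;> exact absurd h (by decide)

lemma one_unique {r : ℕ} (u : V r) {i j : Fin r}
    (hi : c u i = 1) (hj : c u j = 1) : i = j := by
  cases u with
  | inl f => exact absurd hi (not_one_inl f i)
  | inr p =>
    obtain ⟨k, g⟩ := p
    rw [one_iff] at hi hj; rw [hi, hj]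

lemma lt_of_one_zero {r : ℕ} (u : V r) {i j : Fin r}
    (hi : c u i = 1) (hj : c u j = 0) : (j : ℕ) < (i : ℕ) := by
  cases u with
  | inl f => exact absurd hi (not_one_inl f i)
  | inr p =>
    obtain ⟨k, g⟩ := p
    rw [one_iff] at hi
    have := zero_lt k g j hj
    omega

lemma c_inj {r : ℕ} : Function.Injective (c (r := r)) := by
  intro u v h
  cases u with
  | inl f =>
    cases v with
    | inl f' =>
      have : f = f' := by
        funext i
        have hi := congrFun h i
        simp only [c_inl] at hi
        cases hf : f i <;> cases hf' : f' i <;>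
          simp [hf, hf'] at hi ⊢ <;> exact absurd hi (by decide)
      rw [this]
    | inr p =>
      obtain ⟨k, g⟩ := p
      have h1 : c (.inr ⟨k, g⟩ : V r) k = 1 := (one_iff k g k).mpr rfl
      rw [← congrFun h k] at h1
      exact absurd h1 (not_one_inl f k)
  | inr p =>
    obtain ⟨k, g⟩ := p
    cases v with
    | inl f' =>
      have h1 : c (.inr ⟨k, g⟩ : V r) k = 1 := (one_iff k g k).mpr rfl
      rw [h] at h1
      exact absurd h1 (not_one_inl f' k)
    | inr p' =>
      obtain ⟨k', g'⟩ := p'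
      have h1 : c (.inr ⟨k, g⟩ : V r) k = 1 := (one_iff k g k).mpr rfl
      rw [h] at h1
      have hk : k = k' := (one_iff k' g' k).mp h1
      subst hk
      have : g = g' := by
        funext j
        have hjr : (j : ℕ) < r := j.isLt.trans k.isLt
        have hi := congrFun h ⟨(j : ℕ), hjr⟩
        rw [c_inr, c_inr, dif_pos j.isLt, dif_pos j.isLt] at hi
        have hje : (⟨(⟨(j : ℕ), hjr⟩ : Fin r) , j.isLt⟩ : Fin (k : ℕ)) = j := rfl
        rw [hje] at hi
        cases hg : g j <;> cases hg' : g' j <;>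
          simp [hg, hg'] at hi ⊢ <;> exact absurd hi (by decide)
      rw [this]

/-- The graph. -/
def G (r : ℕ) : SimpleGraph (V r) :=
  SimpleGraph.fromRel (fun u v => ∃ i, c u i = 0 ∧ c v i = 1)

lemma adj_iff {r : ℕ} (u v : V r) :
    (G r).Adj u v ↔ u ≠ v ∧
      ((∃ i, c u i = 0 ∧ c v i = 1) ∨ (∃ i, c v i = 0 ∧ c u i = 1)) := by
  rfl

/-- Witness vertex with a single `1` at `p`, `2` elsewhere. -/
def w1 {r : ℕ} (p : Fin r) : V r := .inr ⟨p, fun _ => true⟩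

/-- Witness vertex with a single `0` at `p`, `2` elsewhere. -/
def w0 {r : ℕ} (p : Fin r) : V r := .inl (fun i => decide (i ≠ p))

lemma c_w1 {r : ℕ} (p i : Fin r) : c (w1 p) i = 1 ↔ i = p := one_iff p _ i

lemma c_w1_ne_zero {r : ℕ} (p i : Fin r) : c (w1 p) i ≠ 0 := by
  unfold w1
  rw [c_inr]
  split_ifs <;> first | decide | simp_all

lemma c_w0 {r : ℕ} (p i : Fin r) : c (w0 p) i = 0 ↔ i = p := by
  unfold w0
  rw [c_inl]
  by_cases h : i = p <;> simp [h] <;> decide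

lemma c_w0_ne_one {r : ℕ} (p i : Fin r) : c (w0 p) i ≠ 1 := not_one_inl _ i

lemma adj_w1 {r : ℕ} (u : V r) (p : Fin r) : (G r).Adj u (w1 p) ↔ c u p = 0 := by
  rw [adj_iff]
  constructor
  · rintro ⟨hne, (⟨i, h0, h1⟩ | ⟨i, h0, h1⟩)⟩
    · rwa [(c_w1 p i).mp h1] at h0
    · exact absurd h0 (c_w1_ne_zero p i)
  · intro h0
    refine ⟨?_, Or.inl ⟨p, h0, (c_w1 p p).mpr rfl⟩⟩
    intro he
    rw [he] at h0
    exact c_w1_ne_zero p p h0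

lemma adj_w0 {r : ℕ} (u : V r) (p : Fin r) : (G r).Adj u (w0 p) ↔ c u p = 1 := by
  rw [adj_iff]
  constructor
  · rintro ⟨hne, (⟨i, h0, h1⟩ | ⟨i, h0, h1⟩)⟩
    · exact absurd h1 (c_w0_ne_one p i)
    · rwa [(c_w0 p i).mp h0] at h1
  · intro h1
    refine ⟨?_, Or.inr ⟨p, (c_w0 p p).mpr rfl, h1⟩⟩
    intro he
    rw [he] at h1
    exact c_w0_ne_one p p h1

lemma fin3_eq (a b : Fin 3) (h0 : a = 0 ↔ b = 0) (h1 : a = 1 ↔ b = 1) : a = b := by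
  revert h0 h1; revert a b; decide

lemma sum_two_pow (n : ℕ) : ∑ i ∈ Finset.range n, 2 ^ i = 2 ^ n - 1 := by
  induction n with
  | zero => simp
  | succ n ih =>
    rw [Finset.sum_range_succ, ih, pow_succ]
    have : 1 ≤ 2 ^ n := Nat.one_le_two_pow
    omega

lemma card_V (r : ℕ) : Fintype.card (V r) = 2 ^ (r + 1) - 1 := by
  rw [Fintype.card_sum, Fintype.card_sigma]
  simp only [Fintype.card_fun, Fintype.card_bool, Fintype.card_fin]
  rw [Fin.sum_univ_eq_sum_range (fun k => 2 ^ k) r, sum_two_pow]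
  have : 1 ≤ 2 ^ r := Nat.one_le_two_pow
  rw [pow_succ]
  omega

end Stmt4Aux

open Stmt4Aux in
/-- For every `r` there is a twin-free graph on exactly `2^(r+1) - 1` vertices
whose edge set partitions into `r` bicliques. -/
theorem stmt4 (r : ℕ) :
    ∃ (V : Type) (_ : Fintype V) (G : SimpleGraph V),
      Fintype.card V = 2 ^ (r + 1) - 1 ∧
      (∀ x y : V, G.neighborSet x = G.neighborSet y → x = y) ∧
      ∃ A B : Fin r → Finset V, G.IsBicliquePartition A B := by
  classical
  refine ⟨V r, inferInstance, G r, card_V r, ?_, ?_⟩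
  · -- twin-free
    intro x y h
    have hadj : ∀ w, (G r).Adj x w ↔ (G r).Adj y w := by
      intro w
      have := Set.ext_iff.mp h w
      simpa [SimpleGraph.mem_neighborSet] using this
    apply c_inj
    funext p
    refine fin3_eq _ _ ?_ ?_
    · rw [← adj_w1 x p, ← adj_w1 y p]; exact hadj (w1 p)
    · rw [← adj_w0 x p, ← adj_w0 y p]; exact hadj (w0 p)
  · refine ⟨fun i => Finset.univ.filter (fun v => c v i = 0),
      fun i => Finset.univ.filter (fun v => c v i = 1), ?_, ?_, ?_⟩
    · intro i
      rw [Finset.disjoint_left]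
      intro a ha hb
      simp only [Finset.mem_filter] at ha hb
      rw [ha.2] at hb
      exact absurd hb.2 (by decide)
    · intro i a ha b hb
      simp only [Finset.mem_filter] at ha hb
      rw [adj_iff]
      refine ⟨?_, Or.inl ⟨i, ha.2, hb.2⟩⟩
      intro he
      rw [he, hb.2] at ha
      exact absurd ha.2 (by decide)
    · intro e he
      induction e with
      | h u v =>
        rw [SimpleGraph.mem_edgeSet, adj_iff] at he
        obtain ⟨hne, hd⟩ := he
        have key : ∀ (j : Fin r) (a b : V r), c a j = 0 → c b j = 1 →
            s(u, v) = s(a, b) →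
            ((c u j = 0 ∧ c v j = 1) ∨ (c v j = 0 ∧ c u j = 1)) := by
          intro j a b ha hb heq
          rw [Sym2.eq_iff] at heq
          rcases heq with ⟨hu, hv⟩ | ⟨hu, hv⟩
          · left; rw [hu, hv]; exact ⟨ha, hb⟩
          · right; rw [hu, hv]; exact ⟨ha, hb⟩
        rcases hd with ⟨i, h0, h1⟩ | ⟨i, h0, h1⟩
        · refine ⟨i, ⟨u, by simp [h0], v, by simp [h1], rfl⟩, ?_⟩
          rintro j ⟨a, ha, b, hb, heq⟩
          simp only [Finset.mem_filter] at ha hb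
          rcases key j a b ha.2 hb.2 heq with ⟨hj0, hj1⟩ | ⟨hj0, hj1⟩
          · exact one_unique v hj1 h1
          · have l1 := lt_of_one_zero u hj1 h0
            have l2 := lt_of_one_zero v h1 hj0
            omega
        · refine ⟨i, ⟨v, by simp [h0], u, by simp [h1], Sym2.eq_swap⟩, ?_⟩
          rintro j ⟨a, ha, b, hb, heq⟩
          simp only [Finset.mem_filter] at ha hb
          rcases key j a b ha.2 hb.2 heq with ⟨hj0, hj1⟩ | ⟨hj0, hj1⟩
          · have l1 := lt_of_one_zero v hj1 h0
            have l2 := lt_of_one_zero u h1 hj0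
            omega
          · exact one_unique u hj1 h1
end

section
/- Let G be a twin-free graph with biclique partition E(G) = ∪_{i=1}^r E(A_i, B_i). Assign each vertex u the vector v_u ∈ {0,1,2}^r with (v_u)_i = 1 if u ∈ A_i, 0 if u ∈ B_i, 2 otherwise. Then for every nonempty index set I ⊆ {1,...,r}, the number of vertices u whose vector v_u has {0,1}-coordinates exactly on I is at most 2. -/
/-- In a twin-free graph with a biclique partition into parts `(A i, B i)`,
for every nonempty index set `I` there are at most two vertices whose set of
`{0,1}`-coordinates (i.e. indices `i` with `u ∈ A i ∪ B i`) is exactly `I`. -/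
theorem stmt6 {V : Type*} [Fintype V] (G : SimpleGraph V)
    (htf : ∀ x y : V, G.neighborSet x = G.neighborSet y → x = y)
    (r : ℕ) (A B : Fin r → Finset V) (hpart : G.IsBicliquePartition A B)
    (I : Finset (Fin r)) (hI : I.Nonempty) :
    {u : V | ∀ i : Fin r, (u ∈ A i ∨ u ∈ B i) ↔ i ∈ I}.ncard ≤ 2 := by
  obtain ⟨hdisj, hadj, huniq⟩ := hpart
  set S : Set V := {u : V | ∀ i : Fin r, (u ∈ A i ∨ u ∈ B i) ↔ i ∈ I} with hSdef
  -- uniqueness of a differing coordinate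
  have diff_unique : ∀ x y : V, ∀ i j : Fin r,
      ((x ∈ A i ∧ y ∈ B i) ∨ (x ∈ B i ∧ y ∈ A i)) →
      ((x ∈ A j ∧ y ∈ B j) ∨ (x ∈ B j ∧ y ∈ A j)) → i = j := by
    intro x y i j hi hj
    have hadjxy : G.Adj x y := by
      rcases hi with ⟨ha, hb⟩ | ⟨ha, hb⟩
      · exact hadj i x ha y hb
      · exact (hadj i y hb x ha).symm
    obtain ⟨k, _, hkuniq⟩ := huniq _ (G.mem_edgeSet.mpr hadjxy)
    have hi' : ∃ a ∈ A i, ∃ b ∈ B i, s(x, y) = s(a, b) := by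
      rcases hi with ⟨ha, hb⟩ | ⟨ha, hb⟩
      · exact ⟨x, ha, y, hb, rfl⟩
      · exact ⟨y, hb, x, ha, Sym2.eq_swap⟩
    have hj' : ∃ a ∈ A j, ∃ b ∈ B j, s(x, y) = s(a, b) := by
      rcases hj with ⟨ha, hb⟩ | ⟨ha, hb⟩
      · exact ⟨x, ha, y, hb, rfl⟩
      · exact ⟨y, hb, x, ha, Sym2.eq_swap⟩
    rw [hkuniq i hi', hkuniq j hj']
  -- neighbors transfer between vertices with identical vectors
  have nb : ∀ x ∈ S, ∀ y ∈ S,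
      (∀ i, ¬ ((x ∈ A i ∧ y ∈ B i) ∨ (x ∈ B i ∧ y ∈ A i))) →
      ∀ z, G.Adj x z → G.Adj y z := by
    intro x hx y hy hnd z hxz
    obtain ⟨k, ⟨a, ha, b, hb, heq⟩, _⟩ := huniq _ (G.mem_edgeSet.mpr hxz)
    rw [Sym2.eq_iff] at heq
    rcases heq with ⟨hxa, hzb⟩ | ⟨hxb, hza⟩
    · subst hxa; subst hzb
      have hkI : k ∈ I := (hx k).mp (Or.inl ha)
      rcases (hy k).mpr hkI with hyA | hyB
      · exact hadj k y hyA z hb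
      · exact absurd (Or.inl ⟨ha, hyB⟩) (hnd k)
    · subst hxb; subst hza
      have hkI : k ∈ I := (hx k).mp (Or.inr hb)
      rcases (hy k).mpr hkI with hyA | hyB
      · exact absurd (Or.inr ⟨hb, hyA⟩) (hnd k)
      · exact (hadj k z ha y hyB).symm
  have same_eq : ∀ x ∈ S, ∀ y ∈ S,
      (∀ i, ¬ ((x ∈ A i ∧ y ∈ B i) ∨ (x ∈ B i ∧ y ∈ A i))) → x = y := by
    intro x hx y hy hnd
    have hnd' : ∀ i, ¬ ((y ∈ A i ∧ x ∈ B i) ∨ (y ∈ B i ∧ x ∈ A i)) := by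
      intro i h
      exact hnd i (by tauto)
    apply htf
    ext z
    simp only [SimpleGraph.mem_neighborSet]
    exact ⟨fun h => nb x hx y hy hnd z h, fun h => nb y hy x hx hnd' z h⟩
  by_contra hcon
  push_neg at hcon
  obtain ⟨u, hu, v, hv, w, hw, huv, huw, hvw⟩ :=
    (Set.two_lt_ncard (Set.toFinite S)).mp hcon
  -- differing coordinates exist for distinct vertices
  have exd : ∀ x ∈ S, ∀ y ∈ S, x ≠ y →
      ∃ i, (x ∈ A i ∧ y ∈ B i) ∨ (x ∈ B i ∧ y ∈ A i) := by
    intro x hx y hy hne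
    by_contra h
    push_neg at h
    exact hne (same_eq x hx y hy (fun i hh => by
      rcases hh with ⟨h1, h2⟩ | ⟨h1, h2⟩
      · exact (h i).1 h1 h2
      · exact (h i).2 h1 h2))
  obtain ⟨i, hiuv⟩ := exd u hu v hv huv
  obtain ⟨j, hjuw⟩ := exd u hu w hw huw
  have hdj : ∀ k x, x ∈ A k → x ∈ B k → False := fun k x hA hB =>
    Finset.disjoint_left.mp (hdisj k) hA hB
  by_cases hij : i = j
  · subst hij
    -- u,v differ at i and u,w differ at i; show v,w never differ
    apply hvw
    apply same_eq v hv w hw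
    intro l hl
    by_cases hli : l = i
    · subst hli
      rcases hiuv with ⟨huA, hvB⟩ | ⟨huB, hvA⟩
      · have hwB : w ∈ B l := by
          rcases hjuw with ⟨_, h⟩ | ⟨h, _⟩
          · exact h
          · exact absurd huA (fun hh => hdj l u hh h)
        rcases hl with ⟨hvA, _⟩ | ⟨_, hwA⟩
        · exact hdj l v hvA hvB
        · exact hdj l w hwA hwB
      · have hwA : w ∈ A l := by
          rcases hjuw with ⟨h, _⟩ | ⟨_, h⟩
          · exact absurd h (fun hh => hdj l u hh huB)
          · exact h
        rcases hl with ⟨_, hwB⟩ | ⟨hvB, _⟩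
        · exact hdj l w hwA hwB
        · exact hdj l v hvA hvB
    · -- l ≠ i : then u and v agree at l, u and w agree at l, contradiction
      have hlI : l ∈ I := by
        rcases hl with ⟨hvA, _⟩ | ⟨hvB, _⟩
        · exact (hv l).mp (Or.inl hvA)
        · exact (hv l).mp (Or.inr hvB)
      have hndvl : ¬ ((u ∈ A l ∧ v ∈ B l) ∨ (u ∈ B l ∧ v ∈ A l)) := by
        intro h; exact hli (diff_unique u v l i h hiuv)
      have hndwl : ¬ ((u ∈ A l ∧ w ∈ B l) ∨ (u ∈ B l ∧ w ∈ A l)) := by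
        intro h; exact hli (diff_unique u w l i h hjuw)
      rcases (hu l).mpr hlI with huA | huB
      · have hvA : v ∈ A l := by
          rcases (hv l).mpr hlI with h | h
          · exact h
          · exact absurd (Or.inl ⟨huA, h⟩) hndvl
        have hwA : w ∈ A l := by
          rcases (hw l).mpr hlI with h | h
          · exact h
          · exact absurd (Or.inl ⟨huA, h⟩) hndwl
        rcases hl with ⟨_, hwB⟩ | ⟨hvB, _⟩
        · exact hdj l w hwA hwB
        · exact hdj l v hvA hvB
      · have hvB : v ∈ B l := by
          rcases (hv l).mpr hlI with h | h
          · exact absurd (Or.inr ⟨huB, h⟩) hndvl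
          · exact h
        have hwB : w ∈ B l := by
          rcases (hw l).mpr hlI with h | h
          · exact absurd (Or.inr ⟨huB, h⟩) hndwl
          · exact h
        rcases hl with ⟨hvA, _⟩ | ⟨_, hwA⟩
        · exact hdj l v hvA hvB
        · exact hdj l w hwA hwB
  · -- i ≠ j : v,w differ at both i and j
    have hiI : i ∈ I := by
      rcases hiuv with ⟨h, _⟩ | ⟨h, _⟩
      · exact (hu i).mp (Or.inl h)
      · exact (hu i).mp (Or.inr h)
    have hjI : j ∈ I := by
      rcases hjuw with ⟨h, _⟩ | ⟨h, _⟩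
      · exact (hu j).mp (Or.inl h)
      · exact (hu j).mp (Or.inr h)
    have hndwi : ¬ ((u ∈ A i ∧ w ∈ B i) ∨ (u ∈ B i ∧ w ∈ A i)) := by
      intro h; exact hij (diff_unique u w i j h hjuw)
    have hndvj : ¬ ((u ∈ A j ∧ v ∈ B j) ∨ (u ∈ B j ∧ v ∈ A j)) := by
      intro h; exact hij (diff_unique u v i j hiuv h)
    have hvwi : (v ∈ A i ∧ w ∈ B i) ∨ (v ∈ B i ∧ w ∈ A i) := by
      rcases hiuv with ⟨huA, hvB⟩ | ⟨huB, hvA⟩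
      · have hwA : w ∈ A i := by
          rcases (hw i).mpr hiI with h | h
          · exact h
          · exact absurd (Or.inl ⟨huA, h⟩) hndwi
        exact Or.inr ⟨hvB, hwA⟩
      · have hwB : w ∈ B i := by
          rcases (hw i).mpr hiI with h | h
          · exact absurd (Or.inr ⟨huB, h⟩) hndwi
          · exact h
        exact Or.inl ⟨hvA, hwB⟩
    have hvwj : (v ∈ A j ∧ w ∈ B j) ∨ (v ∈ B j ∧ w ∈ A j) := by
      rcases hjuw with ⟨huA, hwB⟩ | ⟨huB, hwA⟩
      · have hvA : v ∈ A j := by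
          rcases (hv j).mpr hjI with h | h
          · exact h
          · exact absurd (Or.inl ⟨huA, h⟩) hndvj
        exact Or.inl ⟨hvA, hwB⟩
      · have hvB : v ∈ B j := by
          rcases (hv j).mpr hjI with h | h
          · exact absurd (Or.inr ⟨huB, h⟩) hndvj
          · exact h
        exact Or.inr ⟨hvB, hwA⟩
    exact hij (diff_unique v w i j hvwi hvwj)
end

section
/- If a graph G on n vertices has an independent set I, and there are pairwise disjoint pairs {a_1,b_1}, ..., {a_t,b_t} of vertices outside I such that the set {a_1,b_1,...,a_t,b_t} is independent in G and for each i the vertices a_i and b_i have the same neighborhood inside I, then bc(G) ≤ n − |I| − t. -/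
/-- If `I` is independent and `a 1,b 1,...,a t,b t` are distinct vertices outside
`I` forming an independent set, with `a i` and `b i` having the same neighborhood
inside `I` for each `i`, then `bc(G) ≤ n - |I| - t`. -/
theorem stmt13 {V : Type*} [Fintype V] [DecidableEq V] (G : SimpleGraph V)
    (I : Finset V) (hI : (↑I : Set V).Pairwise (fun x y => ¬ G.Adj x y))
    (t : ℕ) (a b : Fin t → V)
    (hdistinct : Function.Injective (fun p : Fin t × Bool => if p.2 then a p.1 else b p.1))
    (houtside : ∀ i, a i ∉ I ∧ b i ∉ I)
    (hindep : ∀ i j, ∀ x ∈ ({a i, b i} : Set V), ∀ y ∈ ({a j, b j} : Set V),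
      ¬ G.Adj x y)
    (hsame : ∀ i, ∀ x ∈ I, G.Adj (a i) x ↔ G.Adj (b i) x) :
    G.bcNum ≤ Fintype.card V - I.card - t := by
  classical
  set f : Fin t × Bool → V := fun p => if p.2 then a p.1 else b p.1 with hfdef
  have hpair : ∀ (i j : Fin t) (c d : Bool),
      (if c then a i else b i) = (if d then a j else b j) → i = j ∧ c = d := by
    intro i j c d h
    have : ((i, c) : Fin t × Bool) = (j, d) := hdistinct h
    exact Prod.ext_iff.mp this
  have haa : ∀ i j, a i = a j → i = j := fun i j h =>
    (hpair i j true true (by simpa using h)).1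
  have hbb : ∀ i j, b i = b j → i = j := fun i j h =>
    (hpair i j false false (by simpa using h)).1
  have hab : ∀ i j, a i ≠ b j := fun i j h => by
    have := (hpair i j true false (by simpa using h)).2
    simp at this
  -- the set S of paired vertices
  set S : Finset V := Finset.image f Finset.univ with hSdef
  have hmemS : ∀ x, x ∈ S ↔ ∃ i, x = a i ∨ x = b i := by
    intro x
    simp only [hSdef, Finset.mem_image, Finset.mem_univ, true_and]
    constructor
    · rintro ⟨⟨i, c⟩, rfl⟩
      cases c <;> exact ⟨i, by simp [hfdef]⟩
    · rintro ⟨i, h | h⟩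
      · exact ⟨(i, true), by simp [hfdef, h]⟩
      · exact ⟨(i, false), by simp [hfdef, h]⟩
  have hScard : S.card = 2 * t := by
    rw [hSdef, Finset.card_image_of_injective _ hdistinct]
    simp [mul_comm]
  have hSI : Disjoint I S := by
    rw [Finset.disjoint_right]
    intro x hx hxI
    obtain ⟨i, h | h⟩ := (hmemS x).mp hx
    · exact (houtside i).1 (h ▸ hxI)
    · exact (houtside i).2 (h ▸ hxI)
  -- the remaining vertices
  set R : Finset V := Finset.univ \ (I ∪ S) with hRdef
  have hmemR : ∀ x, x ∈ R ↔ x ∉ I ∧ x ∉ S := by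
    intro x; simp [hRdef, not_or]
  have hcardIS : (I ∪ S).card = I.card + 2 * t := by
    rw [Finset.card_union_of_disjoint hSI, hScard]
  have hle : I.card + 2 * t ≤ Fintype.card V := by
    rw [← hcardIS]; exact (I ∪ S).card_le_univ
  set k : ℕ := R.card with hkdef
  have hcardR : k = Fintype.card V - (I.card + 2 * t) := by
    rw [hkdef, hRdef, Finset.card_sdiff_of_subset (Finset.subset_univ _), hcardIS,
      Finset.card_univ]
  have hgoalEq : Fintype.card V - I.card - t = t + k := by omega
  rw [hgoalEq]
  -- the enumeration of R
  set r : Fin k → V := fun j => (R.equivFin.symm j : V) with hrdef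
  have hrR : ∀ j, r j ∈ R := fun j => (R.equivFin.symm j).2
  have hrinj : Function.Injective r :=
    fun j j' h => R.equivFin.symm.injective (Subtype.ext h)
  have hrsurj : ∀ x ∈ R, ∃ j, r j = x := by
    intro x hx
    exact ⟨R.equivFin ⟨x, hx⟩, by simp [hrdef]⟩
  -- a key (linear order) on V
  set key : V → ℕ := fun v => ((Fintype.equivFin V) v : ℕ) with hkeydef
  have hkeyinj : Function.Injective key := by
    intro x y h
    exact (Fintype.equivFin V).injective (Fin.ext h)
  -- building the partition
  set A' : Fin t ⊕ Fin k → Finset V :=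
    Sum.elim (fun i => {a i, b i}) (fun j => {r j}) with hA'def
  set B' : Fin t ⊕ Fin k → Finset V :=
    Sum.elim (fun i => I.filter (fun y => G.Adj (a i) y))
      (fun j => Finset.univ.filter
        (fun w => G.Adj (r j) w ∧ (w ∉ R ∨ key w < key (r j)))) with hB'def
  apply Nat.sInf_le
  refine ⟨fun i => A' (finSumFinEquiv.symm i), fun i => B' (finSumFinEquiv.symm i),
    ?_, ?_, ?_⟩
  · -- disjointness
    intro i
    rcases hsum : finSumFinEquiv.symm i with i' | j <;>
      simp only [hsum, hA'def, hB'def, Sum.elim_inl, Sum.elim_inr]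
    · rw [Finset.disjoint_left]
      intro x hx hx'
      have hxI := (Finset.mem_filter.mp hx').1
      simp only [Finset.mem_insert, Finset.mem_singleton] at hx
      rcases hx with rfl | rfl
      · exact (houtside i').1 hxI
      · exact (houtside i').2 hxI
    · rw [Finset.disjoint_left]
      intro x hx hx'
      simp only [Finset.mem_singleton] at hx
      subst hx
      have := (Finset.mem_filter.mp hx').2.1
      exact G.irrefl this
  · -- adjacency
    intro i
    rcases hsum : finSumFinEquiv.symm i with i' | j <;>
      simp only [hsum, hA'def, hB'def, Sum.elim_inl, Sum.elim_inr]
    · intro u hu v hv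
      have hvI := (Finset.mem_filter.mp hv).1
      have hadj := (Finset.mem_filter.mp hv).2
      simp only [Finset.mem_insert, Finset.mem_singleton] at hu
      rcases hu with rfl | rfl
      · exact hadj
      · exact (hsame i' v hvI).mp hadj
    · intro u hu v hv
      simp only [Finset.mem_singleton] at hu
      subst hu
      exact (Finset.mem_filter.mp hv).2.1
  · -- partition of edges
    intro e he
    induction e using Sym2.ind with
    | _ x y =>
    rw [SimpleGraph.mem_edgeSet] at he
    refine (finSumFinEquiv.existsUnique_congr_left
      (p := fun s0 => ∃ u ∈ A' s0, ∃ v ∈ B' s0, s(x, y) = s(u, v))).mp ?_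
    -- characterize membership
    have hne : x ≠ y := G.ne_of_adj he
    -- a vertex in S is not in I and vice versa; R is disjoint from both
    have hSnotR : ∀ x, x ∈ S → x ∉ R := fun x hx hxR => ((hmemR x).mp hxR).2 hx
    have hInotR : ∀ x, x ∈ I → x ∉ R := fun x hx hxR => ((hmemR x).mp hxR).1 hx
    -- claim: what it means for inl i to cover the edge
    have claimL : ∀ i', (∃ u ∈ A' (Sum.inl i'), ∃ v ∈ B' (Sum.inl i'), s(x, y) = s(u, v)) →
        ((x = a i' ∨ x = b i') ∧ y ∈ I) ∨ ((y = a i' ∨ y = b i') ∧ x ∈ I) := by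
      rintro i' ⟨u, hu, v, hv, huv⟩
      simp only [hA'def, Sum.elim_inl, Finset.mem_insert, Finset.mem_singleton] at hu
      have hvI : v ∈ I := by
        simp only [hB'def, Sum.elim_inl, Finset.mem_filter] at hv
        exact hv.1
      rcases Sym2.eq_iff.mp huv with ⟨rfl, rfl⟩ | ⟨rfl, rfl⟩
      · exact Or.inl ⟨hu, hvI⟩
      · exact Or.inr ⟨hu, hvI⟩
    have claimR : ∀ j, (∃ u ∈ A' (Sum.inr j), ∃ v ∈ B' (Sum.inr j), s(x, y) = s(u, v)) →
        (x = r j ∧ (y ∉ R ∨ key y < key x)) ∨ (y = r j ∧ (x ∉ R ∨ key x < key y)) := by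
      rintro j ⟨u, hu, v, hv, huv⟩
      simp only [hA'def, Sum.elim_inr, Finset.mem_singleton] at hu
      subst hu
      simp only [hB'def, Sum.elim_inr, Finset.mem_filter, Finset.mem_univ, true_and] at hv
      rcases Sym2.eq_iff.mp huv with ⟨rfl, rfl⟩ | ⟨rfl, rfl⟩
      · exact Or.inl ⟨rfl, hv.2⟩
      · exact Or.inr ⟨rfl, hv.2⟩
    -- existence
    have hex : ∃ s0 : Fin t ⊕ Fin k, ∃ u ∈ A' s0, ∃ v ∈ B' s0, s(x, y) = s(u, v) := by
      by_cases hxR : x ∈ R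
      · obtain ⟨j, rfl⟩ := hrsurj x hxR
        by_cases hyR : y ∈ R
        · -- both in R; compare keys
          have hkne : key (r j) ≠ key y := fun h => hne (hkeyinj h)
          rcases lt_or_gt_of_ne hkne with hlt | hgt
          · obtain ⟨j', rfl⟩ := hrsurj y hyR
            refine ⟨Sum.inr j', r j', ?_, r j, ?_, Sym2.eq_swap⟩
            · simp [hA'def]
            · simp only [hB'def, Sum.elim_inr, Finset.mem_filter, Finset.mem_univ, true_and]
              exact ⟨he.symm, Or.inr hlt⟩
          · refine ⟨Sum.inr j, r j, ?_, y, ?_, rfl⟩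
            · simp [hA'def]
            · simp only [hB'def, Sum.elim_inr, Finset.mem_filter, Finset.mem_univ, true_and]
              exact ⟨he, Or.inr hgt⟩
        · refine ⟨Sum.inr j, r j, ?_, y, ?_, rfl⟩
          · simp [hA'def]
          · simp only [hB'def, Sum.elim_inr, Finset.mem_filter, Finset.mem_univ, true_and]
            exact ⟨he, Or.inl hyR⟩
      · by_cases hyR : y ∈ R
        · obtain ⟨j, rfl⟩ := hrsurj y hyR
          refine ⟨Sum.inr j, r j, ?_, x, ?_, Sym2.eq_swap⟩
          · simp [hA'def]
          · simp only [hB'def, Sum.elim_inr, Finset.mem_filter, Finset.mem_univ, true_and]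
            exact ⟨he.symm, Or.inl hxR⟩
        · -- both outside R: each in I ∪ S
          have hx' : x ∈ I ∨ x ∈ S := by
            by_contra h
            push_neg at h
            exact hxR ((hmemR x).mpr ⟨h.1, h.2⟩)
          have hy' : y ∈ I ∨ y ∈ S := by
            by_contra h
            push_neg at h
            exact hyR ((hmemR y).mpr ⟨h.1, h.2⟩)
          rcases hx' with hxI | hxS
          · rcases hy' with hyI | hyS
            · exact absurd he (hI hxI hyI hne)
            · -- y ∈ S, x ∈ I
              obtain ⟨i, hy⟩ := (hmemS y).mp hyS
              refine ⟨Sum.inl i, y, ?_, x, ?_, Sym2.eq_swap⟩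
              · simp only [hA'def, Sum.elim_inl, Finset.mem_insert, Finset.mem_singleton]
                exact hy
              · simp only [hB'def, Sum.elim_inl, Finset.mem_filter]
                refine ⟨hxI, ?_⟩
                rcases hy with rfl | rfl
                · exact he.symm
                · exact (hsame i x hxI).mpr he.symm
          · -- x ∈ S
            rcases hy' with hyI | hyS
            · obtain ⟨i, hx⟩ := (hmemS x).mp hxS
              refine ⟨Sum.inl i, x, ?_, y, ?_, rfl⟩
              · simp only [hA'def, Sum.elim_inl, Finset.mem_insert, Finset.mem_singleton]
                exact hx
              · simp only [hB'def, Sum.elim_inl, Finset.mem_filter]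
                refine ⟨hyI, ?_⟩
                rcases hx with rfl | rfl
                · exact he
                · exact (hsame i y hyI).mpr he
            · -- both in S: contradiction with hindep
              obtain ⟨i, hx⟩ := (hmemS x).mp hxS
              obtain ⟨i', hy⟩ := (hmemS y).mp hyS
              exact absurd he (hindep i i' x (by rcases hx with rfl | rfl <;> simp)
                y (by rcases hy with rfl | rfl <;> simp))
    obtain ⟨s0, hs0⟩ := hex
    refine ⟨s0, hs0, ?_⟩
    -- uniqueness
    intro s1 hs1
    -- general: two covers are equal
    suffices H : ∀ s1 s2, (∃ u ∈ A' s1, ∃ v ∈ B' s1, s(x, y) = s(u, v)) →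
        (∃ u ∈ A' s2, ∃ v ∈ B' s2, s(x, y) = s(u, v)) → s1 = s2 by
      exact H s1 s0 hs1 hs0
    intro s1 s2 h1 h2
    have habS : ∀ i', a i' ∈ S := fun i' => (hmemS _).mpr ⟨i', Or.inl rfl⟩
    have hbS : ∀ i', b i' ∈ S := fun i' => (hmemS _).mpr ⟨i', Or.inr rfl⟩
    rcases s1 with i1 | j1 <;> rcases s2 with i2 | j2
    · -- inl, inl
      have c1 := claimL i1 h1
      have c2 := claimL i2 h2
      congr 1
      rcases c1 with ⟨hx1, hy1⟩ | ⟨hy1, hx1⟩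
      · rcases c2 with ⟨hx2, _⟩ | ⟨hy2, _⟩
        · rcases hx1 with rfl | rfl <;> rcases hx2 with h | h
          · exact haa _ _ h
          · exact absurd h (hab i1 i2)
          · exact absurd h.symm (hab i2 i1)
          · exact hbb _ _ h
        · -- y ∈ I and y ∈ {a i2, b i2}: contradiction
          exfalso
          rcases hy2 with rfl | rfl
          · exact (houtside i2).1 hy1
          · exact (houtside i2).2 hy1
      · rcases c2 with ⟨hx2, _⟩ | ⟨hy2, _⟩
        · exfalso
          rcases hx2 with rfl | rfl
          · exact (houtside i2).1 hx1
          · exact (houtside i2).2 hx1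
        · rcases hy1 with rfl | rfl <;> rcases hy2 with h | h
          · exact haa _ _ h
          · exact absurd h (hab i1 i2)
          · exact absurd h.symm (hab i2 i1)
          · exact hbb _ _ h
    · -- inl, inr: contradiction
      exfalso
      have c1 := claimL i1 h1
      have c2 := claimR j2 h2
      have hxnR : x ∉ R := by
        rcases c1 with ⟨hx1, _⟩ | ⟨_, hx1⟩
        · rcases hx1 with rfl | rfl
          · exact hSnotR _ (habS i1)
          · exact hSnotR _ (hbS i1)
        · exact hInotR _ hx1
      have hynR : y ∉ R := by
        rcases c1 with ⟨_, hy1⟩ | ⟨hy1, _⟩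
        · exact hInotR _ hy1
        · rcases hy1 with rfl | rfl
          · exact hSnotR _ (habS i1)
          · exact hSnotR _ (hbS i1)
      rcases c2 with ⟨rfl, _⟩ | ⟨rfl, _⟩
      · exact hxnR (hrR j2)
      · exact hynR (hrR j2)
    · -- inr, inl: symmetric contradiction
      exfalso
      have c1 := claimL i2 h2
      have c2 := claimR j1 h1
      have hxnR : x ∉ R := by
        rcases c1 with ⟨hx1, _⟩ | ⟨_, hx1⟩
        · rcases hx1 with rfl | rfl
          · exact hSnotR _ (habS i2)
          · exact hSnotR _ (hbS i2)
        · exact hInotR _ hx1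
      have hynR : y ∉ R := by
        rcases c1 with ⟨_, hy1⟩ | ⟨hy1, _⟩
        · exact hInotR _ hy1
        · rcases hy1 with rfl | rfl
          · exact hSnotR _ (habS i2)
          · exact hSnotR _ (hbS i2)
      rcases c2 with ⟨rfl, _⟩ | ⟨rfl, _⟩
      · exact hxnR (hrR j1)
      · exact hynR (hrR j1)
    · -- inr, inr
      have c1 := claimR j1 h1
      have c2 := claimR j2 h2
      congr 1
      rcases c1 with ⟨hx1, hk1⟩ | ⟨hy1, hk1⟩ <;>
        rcases c2 with ⟨hx2, hk2⟩ | ⟨hy2, hk2⟩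
      · exact hrinj (hx1 ▸ hx2 ▸ rfl)
      · exfalso
        have hxR : x ∈ R := hx1 ▸ hrR j1
        have hyR : y ∈ R := hy2 ▸ hrR j2
        rcases hk1 with h | h
        · exact h hyR
        · rcases hk2 with h' | h'
          · exact h' hxR
          · omega
      · exfalso
        have hxR : x ∈ R := hx2 ▸ hrR j2
        have hyR : y ∈ R := hy1 ▸ hrR j1
        rcases hk1 with h | h
        · exact h hxR
        · rcases hk2 with h' | h'
          · exact h' hyR
          · omega
      · exact hrinj (hy1 ▸ hy2 ▸ rfl)
end

section
/- For 2 ≤ i ≤ 0.9k, k ≤ 2.04·log₂ n, and n sufficiently large, the ratio [C(k,i)·C(n−k, k−i) / C(n,k)] · 2^{i(i−1)/2} is at most n^{−0.05 i}. -/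
open Real Filter Asymptotics

private lemma nat_key (n k : ℕ) (hkn : k ≤ n) :
    ∀ i, i ≤ k → n.choose (k - i) * (n - k + 1) ^ i ≤ n.choose k * k ^ i := by
  intro i
  induction i with
  | zero => simp
  | succ i ih =>
    intro hik
    have hik' : i ≤ k := le_of_lt (Nat.lt_of_succ_le hik)
    have h1 : n.choose (k - (i + 1)) * (n - k + 1) ≤ n.choose (k - i) * k := by
      have hkey : n.choose (k - i) * (k - i) =
          n.choose (k - (i + 1)) * (n - (k - (i + 1))) := by
        have h : k - i = (k - (i + 1)) + 1 := by omega
        rw [h, Nat.choose_succ_right_eq]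
      have h2 : n - k + 1 ≤ n - (k - (i + 1)) := by omega
      calc n.choose (k - (i + 1)) * (n - k + 1)
          ≤ n.choose (k - (i + 1)) * (n - (k - (i + 1))) := Nat.mul_le_mul_left _ h2
        _ = n.choose (k - i) * (k - i) := hkey.symm
        _ ≤ n.choose (k - i) * k := Nat.mul_le_mul_left _ (Nat.sub_le _ _)
    calc n.choose (k - (i + 1)) * (n - k + 1) ^ (i + 1)
        = (n.choose (k - (i + 1)) * (n - k + 1)) * (n - k + 1) ^ i := by ring
      _ ≤ (n.choose (k - i) * k) * (n - k + 1) ^ i := Nat.mul_le_mul_right _ h1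
      _ = (n.choose (k - i) * (n - k + 1) ^ i) * k := by ring
      _ ≤ (n.choose k * k ^ i) * k := Nat.mul_le_mul_right _ (ih hik')
      _ = n.choose k * k ^ (i + 1) := by ring

private lemma nat_claim (n k i : ℕ) (hik : i ≤ k) (hkn : k ≤ n) :
    k.choose i * (n - k).choose (k - i) * (n - k + 1) ^ i ≤ n.choose k * k ^ (2 * i) := by
  have h1 : k.choose i ≤ k ^ i := Nat.choose_le_pow k i
  have h2 : (n - k).choose (k - i) ≤ n.choose (k - i) :=
    Nat.choose_le_choose _ (Nat.sub_le n k)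
  calc k.choose i * (n - k).choose (k - i) * (n - k + 1) ^ i
      ≤ k ^ i * n.choose (k - i) * (n - k + 1) ^ i :=
        Nat.mul_le_mul_right _ (Nat.mul_le_mul h1 h2)
    _ = k ^ i * (n.choose (k - i) * (n - k + 1) ^ i) := by ring
    _ ≤ k ^ i * (n.choose k * k ^ i) := Nat.mul_le_mul_left _ (nat_key n k hkn i hik)
    _ = n.choose k * k ^ (2 * i) := by rw [two_mul, pow_add]; ring

set_option maxHeartbeats 1000000 in
/-- Second-moment estimate: for `2 ≤ i ≤ 0.9k`, `k ≤ 2.04 log₂ n` and `n`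
sufficiently large,
`(C(k,i)·C(n-k,k-i)/C(n,k)) · 2^{i(i-1)/2} ≤ n^{-0.05 i}`. -/
theorem stmt16 :
    ∃ N : ℕ, ∀ n : ℕ, N ≤ n → ∀ k i : ℕ,
      2 ≤ i → (i : ℝ) ≤ 0.9 * (k : ℝ) → (k : ℝ) ≤ 2.04 * Real.logb 2 (n : ℝ) →
      ((k.choose i : ℝ) * ((n - k).choose (k - i) : ℝ) / (n.choose k : ℝ))
          * 2 ^ (i * (i - 1) / 2)
        ≤ (n : ℝ) ^ (-(0.05) * (i : ℝ)) := by
  -- Eventual facts about real `x`.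
  have hlog1 : ∀ᶠ x : ℝ in atTop, 2.04 * Real.logb 2 x ≤ x / 2 := by
    have h := (isLittleO_log_id_atTop.def (by norm_num : (0:ℝ) < 1/6))
    filter_upwards [h, eventually_ge_atTop (1:ℝ)] with x hx hx1
    have hlx : 0 ≤ Real.log x := Real.log_nonneg hx1
    have hx' : Real.log x ≤ (1/6) * x := by
      rw [Real.norm_eq_abs, Real.norm_eq_abs] at hx
      simpa [abs_of_nonneg hlx, abs_of_nonneg (le_trans zero_le_one hx1), id] using hx
    have hlog2pos : (0.6931471803:ℝ) < Real.log 2 := Real.log_two_gt_d9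
    have hl2pos : (0:ℝ) < Real.log 2 := by linarith
    have hb : Real.logb 2 x ≤ 1.45 * Real.log x := by
      rw [show Real.logb 2 x = Real.log x / Real.log 2 from rfl, div_le_iff₀ hl2pos]
      nlinarith
    nlinarith
  have hlog2 : ∀ᶠ x : ℝ in atTop, 8.3232 * (Real.logb 2 x) ^ 2 ≤ x ^ (0.032:ℝ) := by
    have h := ((isLittleO_log_rpow_rpow_atTop (2:ℝ)
        (by norm_num : (0:ℝ) < 0.032)).def (by norm_num : (0:ℝ) < 1/25))
    filter_upwards [h, eventually_ge_atTop (1:ℝ)] with x hx hx1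
    have hlx : 0 ≤ Real.log x := Real.log_nonneg hx1
    have hxpos : (0:ℝ) < x := by linarith
    have hrp : Real.log x ^ (2:ℝ) = Real.log x ^ (2:ℕ) := by
      rw [← Real.rpow_natCast (Real.log x) 2]; norm_num
    have hx' : Real.log x ^ (2:ℕ) ≤ (1/25) * x ^ (0.032:ℝ) := by
      rw [Real.norm_eq_abs, Real.norm_eq_abs, hrp, abs_of_nonneg (by positivity),
        abs_of_nonneg (Real.rpow_nonneg hxpos.le _)] at hx
      exact hx
    have hlog2pos : (0.6931471803:ℝ) < Real.log 2 := Real.log_two_gt_d9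
    have hl2pos : (0:ℝ) < Real.log 2 := by linarith
    have hb : Real.logb 2 x ≤ 1.45 * Real.log x := by
      rw [show Real.logb 2 x = Real.log x / Real.log 2 from rfl, div_le_iff₀ hl2pos]
      nlinarith
    have h0 : 0 ≤ Real.logb 2 x := Real.logb_nonneg (by norm_num) hx1
    have h2 : (Real.logb 2 x) ^ 2 ≤ (1.45 * Real.log x) ^ 2 := by nlinarith
    nlinarith [Real.rpow_nonneg hxpos.le (0.032:ℝ)]
  have hev : ∀ᶠ n : ℕ in atTop,
      (2.04 * Real.logb 2 (n:ℝ) ≤ (n:ℝ) / 2 ∧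
        8.3232 * (Real.logb 2 (n:ℝ)) ^ 2 ≤ (n:ℝ) ^ (0.032:ℝ)) ∧ 2 ≤ n := by
    exact (tendsto_natCast_atTop_atTop.eventually (hlog1.and hlog2)).and
      (eventually_ge_atTop 2)
  obtain ⟨N, hN⟩ := eventually_atTop.mp hev
  refine ⟨N, fun n hn k i hi2 hi09 hk => ?_⟩
  obtain ⟨⟨hA, hB⟩, hn2⟩ := hN n hn
  have hnpos : (0:ℝ) < n := by
    have : (0:ℕ) < n := by omega
    exact_mod_cast this
  have hi2R : (2:ℝ) ≤ (i:ℝ) := by exact_mod_cast hi2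
  set L := Real.logb 2 (n:ℝ) with hLdef
  -- basic consequences
  have hkR : (0:ℝ) ≤ (k:ℝ) := Nat.cast_nonneg k
  have hikR : (i:ℝ) ≤ (k:ℝ) := by nlinarith
  have hik : i ≤ k := by exact_mod_cast hikR
  have hkn2 : (k:ℝ) ≤ (n:ℝ)/2 := le_trans hk hA
  have h2kn : 2 * k ≤ n := by
    have : ((2*k:ℕ):ℝ) ≤ (n:ℝ) := by push_cast; linarith
    exact_mod_cast this
  have hkn : k ≤ n := by omega
  have hCpos : (0:ℝ) < (n.choose k : ℝ) := by exact_mod_cast Nat.choose_pos hkn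
  have hn1 : (2:ℝ) ≤ (n:ℝ) := by exact_mod_cast hn2
  have hDpos : (0:ℝ) < (n:ℝ) - k + 1 := by linarith
  have hD2 : (n:ℝ)/2 ≤ (n:ℝ) - k + 1 := by linarith
  have hL0 : (0:ℝ) ≤ L := by nlinarith
  -- step 1 : cast of the combinatorial estimate
  have hc := nat_claim n k i hik hkn
  have hcR : (k.choose i : ℝ) * ((n - k).choose (k - i) : ℝ) * ((n:ℝ) - k + 1) ^ i
      ≤ (n.choose k : ℝ) * ((k:ℝ)^2) ^ i := by
    have h := (Nat.cast_le (α := ℝ)).mpr hc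
    push_cast [Nat.cast_sub hkn] at h
    calc (k.choose i : ℝ) * ((n - k).choose (k - i) : ℝ) * ((n:ℝ) - k + 1) ^ i
        ≤ (n.choose k : ℝ) * (k:ℝ) ^ (2*i) := h
      _ = (n.choose k : ℝ) * ((k:ℝ)^2) ^ i := by rw [pow_mul]
  have hstep1 : (k.choose i : ℝ) * ((n - k).choose (k - i) : ℝ) / (n.choose k : ℝ)
      ≤ ((k:ℝ)^2 / ((n:ℝ) - k + 1)) ^ i := by
    rw [div_pow, div_le_div_iff₀ hCpos (pow_pos hDpos i)]
    linarith
  -- step 2 : base bound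
  have hbase1 : (k:ℝ)^2 / ((n:ℝ) - k + 1) ≤ 2 * (k:ℝ)^2 / (n:ℝ) := by
    have h1 : (k:ℝ)^2 / ((n:ℝ) - k + 1) ≤ (k:ℝ)^2 / ((n:ℝ)/2) :=
      div_le_div_of_nonneg_left (sq_nonneg _) (by linarith) hD2
    have h2 : (k:ℝ)^2 / ((n:ℝ)/2) = 2 * (k:ℝ)^2 / (n:ℝ) := by
      field_simp
    linarith
  have hstep2 : (k.choose i : ℝ) * ((n - k).choose (k - i) : ℝ) / (n.choose k : ℝ)
      ≤ (2 * (k:ℝ)^2 / (n:ℝ)) ^ i :=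
    hstep1.trans (pow_le_pow_left₀ (by positivity) hbase1 i)
  -- step 3 : the power-of-two factor
  have hm : ((i * (i - 1) / 2 : ℕ) : ℝ) ≤ ((i:ℝ) - 1) / 2 * i := by
    have h1 : ((i * (i - 1) / 2 : ℕ) : ℝ) ≤ ((i * (i - 1) : ℕ) : ℝ) / 2 :=
      Nat.cast_div_le
    have h2 : ((i * (i - 1) : ℕ) : ℝ) = (i:ℝ) * ((i:ℝ) - 1) := by
      push_cast [Nat.cast_sub (by omega : 1 ≤ i)]; ring
    rw [h2] at h1
    calc ((i * (i - 1) / 2 : ℕ) : ℝ) ≤ (i:ℝ) * ((i:ℝ) - 1) / 2 := h1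
      _ = ((i:ℝ) - 1) / 2 * i := by ring
  have hP : (2:ℝ) ^ (i * (i - 1) / 2) ≤ ((2:ℝ) ^ (((i:ℝ) - 1) / 2)) ^ i := by
    rw [← Real.rpow_natCast (2:ℝ) (i * (i - 1) / 2),
      ← Real.rpow_natCast ((2:ℝ) ^ (((i:ℝ) - 1) / 2)) i,
      ← Real.rpow_mul (by norm_num : (0:ℝ) ≤ 2)]
    exact Real.rpow_le_rpow_of_exponent_le one_le_two hm
  -- step 4 : exponential bounds
  have hE : (2:ℝ) ^ (((i:ℝ) - 1) / 2) ≤ (n:ℝ) ^ (0.918:ℝ) := by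
    calc (2:ℝ) ^ (((i:ℝ) - 1) / 2) ≤ (2:ℝ) ^ (L * 0.918) :=
          Real.rpow_le_rpow_of_exponent_le one_le_two (by linarith)
      _ = ((2:ℝ) ^ L) ^ (0.918:ℝ) := Real.rpow_mul (by norm_num) _ _
      _ = (n:ℝ) ^ (0.918:ℝ) := by
          rw [hLdef, Real.rpow_logb (by norm_num) (by norm_num) hnpos]
  have hsq : (k:ℝ) * (k:ℝ) ≤ (2.04 * L) * (2.04 * L) :=
    mul_le_mul hk hk hkR (by linarith)
  have hK : 2 * (k:ℝ)^2 ≤ (n:ℝ) ^ (0.032:ℝ) := by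
    have h8 : 2 * (k:ℝ)^2 ≤ 8.3232 * L^2 := by nlinarith [hsq]
    exact h8.trans hB
  have hfinalbase : 2 * (k:ℝ)^2 / (n:ℝ) * ((2:ℝ) ^ (((i:ℝ) - 1) / 2))
      ≤ (n:ℝ) ^ (-(0.05):ℝ) := by
    have h1 : 2 * (k:ℝ)^2 * ((2:ℝ) ^ (((i:ℝ) - 1) / 2))
        ≤ (n:ℝ) ^ (0.032:ℝ) * (n:ℝ) ^ (0.918:ℝ) :=
      mul_le_mul hK hE (Real.rpow_nonneg (by norm_num) _) (Real.rpow_nonneg hnpos.le _)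
    have h2 : (n:ℝ) ^ (0.032:ℝ) * (n:ℝ) ^ (0.918:ℝ) = (n:ℝ) ^ (0.95:ℝ) := by
      rw [← Real.rpow_add hnpos]; norm_num
    have h3 : (n:ℝ) ^ (0.95:ℝ) / (n:ℝ) = (n:ℝ) ^ (-(0.05):ℝ) := by
      nth_rewrite 2 [← Real.rpow_one (n:ℝ)]
      rw [← Real.rpow_sub hnpos]
      norm_num
    calc 2 * (k:ℝ)^2 / (n:ℝ) * ((2:ℝ) ^ (((i:ℝ) - 1) / 2))
        = 2 * (k:ℝ)^2 * ((2:ℝ) ^ (((i:ℝ) - 1) / 2)) / (n:ℝ) := by ring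
      _ ≤ (n:ℝ) ^ (0.032:ℝ) * (n:ℝ) ^ (0.918:ℝ) / (n:ℝ) := by
          exact div_le_div_of_nonneg_right h1 hnpos.le
      _ = (n:ℝ) ^ (0.95:ℝ) / (n:ℝ) := by rw [h2]
      _ = (n:ℝ) ^ (-(0.05):ℝ) := h3
  -- combine
  calc (k.choose i : ℝ) * ((n - k).choose (k - i) : ℝ) / (n.choose k : ℝ)
        * 2 ^ (i * (i - 1) / 2)
      ≤ (2 * (k:ℝ)^2 / (n:ℝ)) ^ i * ((2:ℝ) ^ (((i:ℝ) - 1) / 2)) ^ i :=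
        mul_le_mul hstep2 hP (by positivity) (by positivity)
    _ = (2 * (k:ℝ)^2 / (n:ℝ) * ((2:ℝ) ^ (((i:ℝ) - 1) / 2))) ^ i := (mul_pow _ _ _).symm
    _ ≤ ((n:ℝ) ^ (-(0.05):ℝ)) ^ i :=
        pow_le_pow_left₀ (by positivity) hfinalbase i
    _ = (n:ℝ) ^ (-(0.05) * (i:ℝ)) := by
        rw [← Real.rpow_natCast ((n:ℝ) ^ (-(0.05):ℝ)) i, ← Real.rpow_mul hnpos.le]
end
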